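/- Fix d ≥ 2. There exist constants c₁, c₂ > 0 depending only on d such that for every primitive vector a ∈ ℤ^d (i.e., gcd(a₁,…,a_d) = 1, a ≠ 0) and every positive integer N with N ≥ |a|², the following holds: writing R = √N and ã = R·a/|a| for the point of the sphere of radius R in the direction of a, there exists y ∈ ℝ^d with |y|² = N and |y − ã| ≤ c₂·R^{1/2}/|a|^{1/2}, such that no x ∈ ℤ^d with |x|² = N satisfies |x − y| ≤ c₁·R^{1/2}/|a|^{1/2}. In other words, the spherical cap of radius c₂·R^{1/2}/√|a| centred at ã contains an empty sub-cap of radius c₁·R^{1/2}/√|a| with no lattice points of the sphere |x|² = N. -/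

import Mathlib

open RealInnerProductSpace Module

set_option maxHeartbeats 1000000

/-- Repulsion of lattice points on spheres: near the point of the sphere of radius `R = √N` in
the direction of a primitive vector `a`, there is an empty sub-cap of radius
`≍ R^{1/2}/|a|^{1/2}` containing no lattice points of the sphere `|x|² = N`. -/
theorem stmt_5 (d : ℕ) (hd : 2 ≤ d) :
    ∃ c₁ : ℝ, 0 < c₁ ∧ ∃ c₂ : ℝ, 0 < c₂ ∧
      ∀ a : Fin d → ℤ, a ≠ 0 → Finset.univ.gcd a = 1 →
      ∀ N : ℕ, 0 < N → (∑ i, (a i : ℝ) ^ 2) ≤ (N : ℝ) →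
      ∃ y : Fin d → ℝ,
        (∑ i, y i ^ 2) = (N : ℝ) ∧
        Real.sqrt (∑ i, (y i - Real.sqrt N * (a i : ℝ) / Real.sqrt (∑ j, (a j : ℝ) ^ 2)) ^ 2)
          ≤ c₂ * Real.sqrt (Real.sqrt N) / Real.sqrt (Real.sqrt (∑ j, (a j : ℝ) ^ 2)) ∧
        ∀ x : Fin d → ℤ, (∑ i, x i ^ 2) = (N : ℤ) →
          ¬ Real.sqrt (∑ i, ((x i : ℝ) - y i) ^ 2)
              ≤ c₁ * Real.sqrt (Real.sqrt N) / Real.sqrt (Real.sqrt (∑ j, (a j : ℝ) ^ 2)) := by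
  refine ⟨1/4, by norm_num, 2, by norm_num, ?_⟩
  intro a ha _hgcd N hN hNa
  classical
  -- a sum-to-norm converter
  have key : ∀ v : EuclideanSpace ℝ (Fin d), ∑ i, v i ^ 2 = ‖v‖ ^ 2 := by
    intro v
    rw [EuclideanSpace.norm_eq, Real.sq_sqrt (by positivity)]
    simp [sq_abs]
  -- scalar setup
  set A2 : ℝ := ∑ j, (a j : ℝ) ^ 2 with hA2def
  have hA2 : (1 : ℝ) ≤ A2 := by
    obtain ⟨i, hi⟩ : ∃ i, a i ≠ 0 := by
      by_contra h; push_neg at h; exact ha (funext h)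
    have h1 : (1 : ℝ) ≤ (a i : ℝ) ^ 2 := by
      have := Int.one_le_abs hi
      have : (1 : ℝ) ≤ |(a i : ℝ)| := by exact_mod_cast (by simpa using this)
      nlinarith [sq_abs ((a i : ℝ))]
    calc (1:ℝ) ≤ (a i : ℝ) ^ 2 := h1
      _ ≤ A2 := Finset.single_le_sum (f := fun j => ((a j : ℝ))^2) (fun j _ => by positivity) (Finset.mem_univ i)
  set A : ℝ := Real.sqrt A2 with hAdef
  have hA : (1 : ℝ) ≤ A := by
    rw [hAdef, show (1:ℝ) = Real.sqrt 1 by simp]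
    exact Real.sqrt_le_sqrt hA2
  have hA2nn : (0:ℝ) ≤ A2 := by linarith
  have hAsq : A ^ 2 = A2 := Real.sq_sqrt hA2nn
  set R : ℝ := Real.sqrt N with hRdef
  have hR : (1 : ℝ) ≤ R := by
    rw [hRdef, show (1:ℝ) = Real.sqrt 1 by simp]
    exact Real.sqrt_le_sqrt (by exact_mod_cast hN)
  have hRsq : R ^ 2 = N := Real.sq_sqrt (Nat.cast_nonneg N)
  have hApos : (0:ℝ) < A := by linarith
  have hRpos : (0:ℝ) < R := by linarith
  set M : ℝ := R * A with hMdef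
  have hM : (1:ℝ) ≤ M := by nlinarith
  have hMpos : (0:ℝ) < M := by linarith
  set m : ℤ := ⌈M - 1/2⌉ with hmdef
  set p : ℝ := (m : ℝ) - 1/2 with hpdef
  have hp1 : M - 1 ≤ p := by
    have := Int.le_ceil (M - 1/2)
    rw [hpdef]; linarith
  have hp2 : p ≤ M := by
    have := Int.ceil_lt_add_one (M - 1/2)
    rw [hpdef]; linarith
  have hp0 : 0 ≤ p := by linarith
  set c : ℝ := p / M with hcdef
  have hc0 : 0 ≤ c := by positivity
  have hc1 : c ≤ 1 := by rw [hcdef]; exact div_le_one_of_le₀ hp2 (le_of_lt hMpos)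
  -- vectors
  set aR : EuclideanSpace ℝ (Fin d) := WithLp.toLp 2 (fun i => (a i : ℝ)) with haRdef
  have haR0 : aR ≠ 0 := by
    intro h
    apply ha
    funext i
    have h2 : (a i : ℝ) = 0 := congrArg (fun v : EuclideanSpace ℝ (Fin d) => v i) h
    exact_mod_cast h2
  have haRnorm : ‖aR‖ = A := by
    rw [EuclideanSpace.norm_eq]
    simp only [haRdef, Real.norm_eq_abs, sq_abs]
    rfl
  -- orthogonal unit vector
  obtain ⟨e, he1, he2⟩ : ∃ e : EuclideanSpace ℝ (Fin d), ‖e‖ = 1 ∧ ((inner ℝ aR e : ℝ) = 0) := by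
    have hdim : finrank ℝ (EuclideanSpace ℝ (Fin d)) = d := finrank_euclideanSpace_fin
    have h1 : finrank ℝ (ℝ ∙ aR) = 1 := finrank_span_singleton haR0
    have h2 : finrank ℝ ((ℝ ∙ aR)ᗮ) ≠ 0 := by
      have := Submodule.finrank_add_finrank_orthogonal (K := (ℝ ∙ aR))
      rw [h1, hdim] at this
      omega
    obtain ⟨v, hv, hv0⟩ : ∃ v, v ∈ (ℝ ∙ aR)ᗮ ∧ v ≠ 0 := by
      apply Submodule.exists_mem_ne_zero_of_ne_bot
      intro hbot
      rw [hbot] at h2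
      simp at h2
    refine ⟨‖v‖⁻¹ • v, norm_smul_inv_norm hv0, ?_⟩
    rw [real_inner_smul_right]
    have : (inner ℝ aR v : ℝ) = 0 :=
      (Submodule.mem_orthogonal _ v).1 hv aR (Submodule.mem_span_singleton_self aR)
    rw [this, mul_zero]
  set s : ℝ := R * Real.sqrt (1 - c^2) with hsdef
  have hs0 : 0 ≤ s := by positivity
  have hssq : s ^ 2 = (N : ℝ) * (1 - c ^ 2) := by
    rw [hsdef, mul_pow, Real.sq_sqrt (show (0:ℝ) ≤ 1 - c^2 by nlinarith), hRsq]
  set atil : EuclideanSpace ℝ (Fin d) := (R / A) • aR with hatildef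
  set y : EuclideanSpace ℝ (Fin d) := (c * (R / A)) • aR + s • e with hydef
  have hAne : A ≠ 0 := ne_of_gt hApos
  -- norms of the pieces
  have hsm : ∀ t : ℝ, ‖t • aR‖ ^ 2 = t ^ 2 * A2 := by
    intro t
    rw [norm_smul, mul_pow, haRnorm, hAsq, Real.norm_eq_abs, sq_abs]
  have hse : ∀ t : ℝ, ‖t • e‖ ^ 2 = t ^ 2 := by
    intro t
    rw [norm_smul, mul_pow, he1, Real.norm_eq_abs, sq_abs, one_pow, mul_one]
  have hinner0 : ∀ t u : ℝ, (inner ℝ (t • aR) (u • e) : ℝ) = 0 := by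
    intro t u
    rw [real_inner_smul_left, real_inner_smul_right, he2]
    ring
  have hynorm : ‖y‖ ^ 2 = (N : ℝ) := by
    rw [hydef, norm_add_sq_real, hsm, hse, hinner0, hssq, ← hAsq, ← hRsq]
    field_simp
    ring
  have hyat : ‖y - atil‖ ^ 2 = 2 * (N : ℝ) * (1 - c) := by
    have hsplit : y - atil = ((c - 1) * (R / A)) • aR + s • e := by
      rw [hydef, hatildef]; module
    rw [hsplit, norm_add_sq_real, hsm, hse, hinner0, hssq, ← hAsq, ← hRsq]
    field_simp
    ring
  have hNM : (N : ℝ) / M = R / A := by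
    rw [hMdef, ← hRsq]
    rw [div_eq_div_iff (by positivity) (ne_of_gt hApos)]
    ring
  have hNpos : (0:ℝ) < N := by exact_mod_cast hN
  have hyat_le : ‖y - atil‖ ^ 2 ≤ 2 * (R / A) := by
    rw [hyat]
    have h1c : 1 - c ≤ 1 / M := by
      have key2 : (1:ℝ) - p/M = (M - p)/M := by field_simp
      rw [hcdef, key2]
      gcongr
      linarith
    calc 2 * (N:ℝ) * (1 - c) ≤ 2 * (N:ℝ) * (1/M) := by gcongr
      _ = 2 * ((N:ℝ)/M) := by ring
      _ = 2 * (R/A) := by rw [hNM]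
  -- the cap radius ρ
  set ρ : ℝ := Real.sqrt R / Real.sqrt A with hρdef
  have hρsq : ρ ^ 2 = R / A := by
    rw [hρdef, div_pow, Real.sq_sqrt (by positivity), Real.sq_sqrt (by positivity)]
  have hρpos : 0 < ρ := by
    rw [hρdef]
    positivity
  -- distance from y to ã
  have hyat_norm : ‖y - atil‖ ≤ 3/2 * ρ := by
    have hRA0 : (0:ℝ) < R / A := by positivity
    have h1 : ‖y - atil‖ ^ 2 ≤ (3/2*ρ)^2 := by
      have h2 : (3/2*ρ)^2 = 9/4 * (R/A) := by rw [mul_pow, hρsq]; ring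
      rw [h2]; linarith [hyat_le]
    calc ‖y - atil‖ = Real.sqrt (‖y - atil‖^2) := (Real.sqrt_sq (norm_nonneg _)).symm
      _ ≤ Real.sqrt ((3/2*ρ)^2) := Real.sqrt_le_sqrt h1
      _ = 3/2*ρ := Real.sqrt_sq (by positivity)
  refine ⟨y, ?_, ?_, ?_⟩
  · rw [key y, hynorm]
  · -- the displayed sum equals ‖y - ã‖²
    have hsum : ∑ i, (y i - R * (a i : ℝ) / A) ^ 2 = ‖y - atil‖ ^ 2 := by
      rw [← key (y - atil)]
      apply Finset.sum_congr rfl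
      intro i _
      have h1 : (y - atil) i = y i - atil i := rfl
      have h2 : atil i = (R / A) * (a i : ℝ) := rfl
      rw [h1, h2]
      ring_nf
    rw [hsum, Real.sqrt_sq (norm_nonneg _)]
    calc ‖y - atil‖ ≤ 3/2 * ρ := hyat_norm
      _ ≤ 2 * ρ := by linarith
      _ = 2 * Real.sqrt R / Real.sqrt A := by rw [hρdef]; ring
  · intro x hx hcon
    -- convert hypothesis to a norm statement
    set xR : EuclideanSpace ℝ (Fin d) := WithLp.toLp 2 (fun i => (x i : ℝ)) with hxRdef
    have hxnorm : ‖xR‖ ^ 2 = (N : ℝ) := by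
      rw [← key xR]
      have : ((∑ i, (x i)^2 : ℤ) : ℝ) = ((N : ℤ) : ℝ) := by exact_mod_cast hx
      push_cast at this
      simpa [hxRdef] using this
    have hxy : ‖xR - y‖ ≤ 1/4 * ρ := by
      have hsum : ∑ i, ((x i : ℝ) - y i) ^ 2 = ‖xR - y‖ ^ 2 := by
        rw [← key (xR - y)]
        exact Finset.sum_congr rfl (fun i _ => rfl)
      rw [hsum, Real.sqrt_sq (norm_nonneg _)] at hcon
      calc ‖xR - y‖ ≤ 1/4 * Real.sqrt R / Real.sqrt A := hcon
        _ = 1/4 * ρ := by rw [hρdef]; ring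
    -- the inner product with a is an integer
    set k : ℤ := ∑ i, x i * a i with hkdef
    have hinner : (inner ℝ xR aR : ℝ) = (k : ℝ) := by
      rw [hkdef]
      push_cast
      rw [PiLp.inner_apply]
      simp [hxRdef, haRdef, RCLike.inner_apply, mul_comm]
    have hxat : ‖xR - atil‖ ^ 2 = 2 * (N : ℝ) - 2 * (R / A) * k := by
      rw [norm_sub_sq_real, hxnorm, hatildef, real_inner_smul_right, hinner, hsm]
      have : (R/A)^2 * A2 = (N : ℝ) := by
        rw [← hAsq, ← hRsq]
        field_simp
      rw [this]
      ring
    -- the gap between squared distances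
    have hdiff : ‖xR - atil‖ ^ 2 - ‖y - atil‖ ^ 2 = (2 * R / A) * (p - k) := by
      rw [hxat, hyat, hcdef]
      rw [hMdef, ← hRsq]
      have hM0 : R * A ≠ 0 := by positivity
      field_simp
      ring
    have hpk : (1:ℝ)/2 ≤ |p - k| := by
      have : p - (k : ℝ) = ((m - k : ℤ) : ℝ) - 1/2 := by
        rw [hpdef]; push_cast; ring
      rw [this]
      rcases le_or_gt (m - k) 0 with h | h
      · refine le_abs.2 (Or.inr ?_)
        have : ((m - k : ℤ) : ℝ) ≤ 0 := by exact_mod_cast h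
        linarith
      · refine le_abs.2 (Or.inl ?_)
        have : (1:ℝ) ≤ ((m - k : ℤ) : ℝ) := by exact_mod_cast h
        linarith
    have hgap : R / A ≤ |‖xR - atil‖ ^ 2 - ‖y - atil‖ ^ 2| := by
      rw [hdiff, abs_mul, abs_of_pos (by positivity : (0:ℝ) < 2 * R / A)]
      calc R / A = (2 * R / A) * (1/2) := by ring
        _ ≤ (2 * R / A) * |p - k| := by gcongr
    -- upper bound on the gap
    set u : ℝ := ‖xR - atil‖ with hudef
    set w : ℝ := ‖y - atil‖ with hwdef
    set t : ℝ := ‖xR - y‖ with htdef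
    have hu0 : 0 ≤ u := norm_nonneg _
    have hw0 : 0 ≤ w := norm_nonneg _
    have ht0 : 0 ≤ t := norm_nonneg _
    have htri : u ≤ t + w := by
      rw [hudef, hwdef, htdef]
      calc ‖xR - atil‖ = ‖(xR - y) + (y - atil)‖ := by rw [sub_add_sub_cancel]
        _ ≤ ‖xR - y‖ + ‖y - atil‖ := norm_add_le _ _
    have hrev : |u - w| ≤ t := by
      rw [hudef, hwdef, htdef]
      have := abs_norm_sub_norm_le (xR - atil) (y - atil)
      rwa [sub_sub_sub_cancel_right] at this
    have habs : |u ^ 2 - w ^ 2| ≤ t * (u + w) := by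
      have : u ^ 2 - w ^ 2 = (u - w) * (u + w) := by ring
      rw [this, abs_mul, abs_of_nonneg (by linarith : (0:ℝ) ≤ u + w)]
      gcongr
    have hfinal : R / A ≤ (1/4 * ρ) * ((1/4 * ρ) + 2 * (3/2 * ρ)) := by
      calc R / A ≤ |u ^ 2 - w ^ 2| := hgap
        _ ≤ t * (u + w) := habs
        _ ≤ t * ((t + w) + w) := by gcongr
        _ ≤ (1/4 * ρ) * (((1/4 * ρ) + (3/2 * ρ)) + (3/2 * ρ)) := by
            gcongr
        _ = (1/4 * ρ) * ((1/4 * ρ) + 2 * (3/2 * ρ)) := by ring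
    have hRA : 0 < R / A := by positivity
    have hend : (1/4 * ρ) * ((1/4 * ρ) + 2 * (3/2 * ρ)) = 13/16 * ρ^2 := by ring
    rw [hend, hρsq] at hfinal
    linarith
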